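/- Let n ≥ 1, 0 ≤ m ≤ n, and let T = conv(v₀,…,v_m) be an m-simplex in ℝⁿ with rational vertices. Then T is regular if and only if the half-open parallelepiped P_T = {x ∈ ℝ^{n+1} : x = Σ_{i=0}^m λ_i ṽ_i, 0 ≤ λ_i < 1} contains no nonzero integer point. -/

import Mathlib

/-- `y` is in the `GL(n,ℤ) ⋉ ℤⁿ`-orbit of `x`, i.e. `y = U x + t` for an integer
matrix `U` with `det U = ±1` and an integer vector `t`. -/
def SameOrbit (n : ℕ) (x y : Fin n → ℝ) : Prop :=
  ∃ (U : Matrix (Fin n) (Fin n) ℤ) (t : Fin n → ℤ),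
    (U.det = 1 ∨ U.det = -1) ∧
    ∀ i, y i = (∑ j, (U i j : ℝ) * x j) + (t i : ℝ)

/-- The subgroup `G_x = ℤ + ℤx₁ + ⋯ + ℤxₙ` of the additive reals. -/
def Gx {n : ℕ} (x : Fin n → ℝ) : AddSubgroup ℝ :=
  AddSubgroup.closure (insert (1 : ℝ) (Set.range x))

/-- A point of `ℝⁿ` is rational if all its coordinates are rational. -/
def IsRationalPoint {n : ℕ} (y : Fin n → ℝ) : Prop :=
  ∀ i, ∃ q : ℚ, y i = (q : ℝ)

/-- The denominator of a rational point: the least positive integer `d`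
with `d • y ∈ ℤⁿ`. -/
noncomputable def den {n : ℕ} (y : Fin n → ℝ) : ℕ :=
  sInf {d : ℕ | 0 < d ∧ ∀ i, ∃ m : ℤ, (d : ℝ) * y i = (m : ℝ)}

/-- The homogeneous correspondent `ỹ = den(y)·(y,1)`, viewed as a real vector. -/
noncomputable def tildeR {n : ℕ} (y : Fin n → ℝ) : Fin (n + 1) → ℝ :=
  fun i => (den y : ℝ) * (Fin.snoc y (1 : ℝ) : Fin (n + 1) → ℝ) i

/-- A rational `m`-simplex `conv(v₀,…,v_m) ⊆ ℝⁿ` is regular if the homogeneous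
correspondents `ṽ₀,…,ṽ_m ∈ ℤ^{n+1}` can be extended to a ℤ-basis of `ℤ^{n+1}`. -/
def IsRegularSimplex {n m : ℕ} (v : Fin (m + 1) → (Fin n → ℝ)) : Prop :=
  AffineIndependent ℝ v ∧ (∀ k, IsRationalPoint (v k)) ∧
  ∃ (b : Module.Basis (Fin (n + 1)) ℤ (Fin (n + 1) → ℤ)) (f : Fin (m + 1) ↪ Fin (n + 1)),
    ∀ k i, ((b (f k)) i : ℝ) = tildeR (v k) i

/-- A rational hyperplane in `ℝⁿ`. -/
def IsRatHyperplane {n : ℕ} (H : Set (Fin n → ℝ)) : Prop :=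
  ∃ (h : Fin n → ℚ) (k : ℚ), h ≠ 0 ∧ H = {z | (∑ i, (h i : ℝ) * z i) = (k : ℝ)}

/-- A rational affine space: an intersection of rational hyperplanes. -/
def IsRatAffineSpace {n : ℕ} (F : Set (Fin n → ℝ)) : Prop :=
  ∃ S : Set (Set (Fin n → ℝ)), (∀ H ∈ S, IsRatHyperplane H) ∧ F = ⋂₀ S

/-- `F_x`: the intersection of all rational hyperplanes containing `x`
(`= ℝⁿ` if there is no such hyperplane). -/
def Fx {n : ℕ} (x : Fin n → ℝ) : Set (Fin n → ℝ) :=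
  ⋂₀ {H | IsRatHyperplane H ∧ x ∈ H}

/-- The (affine) dimension of a subset of `ℝⁿ`. -/
noncomputable def affDim {n : ℕ} (F : Set (Fin n → ℝ)) : ℕ :=
  Module.finrank ℝ ↥(vectorSpan ℝ F)

/-- `d_F`: the least denominator of a rational point of `F`. -/
noncomputable def dF {n : ℕ} (F : Set (Fin n → ℝ)) : ℕ :=
  sInf {d : ℕ | ∃ y ∈ F, IsRationalPoint y ∧ den y = d}

/-- `c_F`: the smallest possible denominator of a vertex of a regular `n`-simplex
`conv(v₀,…,v_n) ⊆ ℝⁿ` with `v₀,…,v_e ∈ F`. -/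
noncomputable def cF {n : ℕ} (e : ℕ) (F : Set (Fin n → ℝ)) : ℕ :=
  sInf {c : ℕ | ∃ (v : Fin (n + 1) → (Fin n → ℝ)) (i : Fin (n + 1)),
    IsRegularSimplex v ∧ (∀ k : Fin (n + 1), (k : ℕ) ≤ e → v k ∈ F) ∧ den (v i) = c}

/-- `c_x = c_{F_x}`. -/
noncomputable def cx {n : ℕ} (x : Fin n → ℝ) : ℕ := cF (affDim (Fx x)) (Fx x)

/-- Membership in the Farey sequence `𝔉_d`. -/
def InFarey (d : ℕ) (x : ℚ) : Prop := 0 ≤ x ∧ x ≤ 1 ∧ x.den ≤ d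

/-- `x` and `y` are neighbors (contiguous elements) of the Farey sequence `𝔉_d`. -/
def FareyNeighbor (d : ℕ) (x y : ℚ) : Prop :=
  InFarey d x ∧ InFarey d y ∧ x ≠ y ∧
  ∀ t : ℚ, InFarey d t → ¬ (min x y < t ∧ t < max x y)

/-- `y` is the companion of `x`: `comp 0 = 1`, `comp 1 = 0`, `comp (1/2) = 1`, and
for denominator `d ≥ 3`, `comp x` is the neighbor of `x` in `𝔉_d` with smaller
denominator than the other neighbor. -/
def IsCompanion (x y : ℚ) : Prop :=
  (x = 0 ∧ y = 1) ∨ (x = 1 ∧ y = 0) ∨ (x = 1/2 ∧ y = 1) ∨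
  (3 ≤ x.den ∧ FareyNeighbor x.den x y ∧
    ∀ z : ℚ, FareyNeighbor x.den x z → z ≠ y → y.den < z.den)

section Helpers

open Finset

lemma den_mem {n : ℕ} {y : Fin n → ℝ} (hy : IsRationalPoint y) :
    0 < den y ∧ ∀ i, ∃ m : ℤ, (den y : ℝ) * y i = (m : ℝ) := by
  have hne : {d : ℕ | 0 < d ∧ ∀ i, ∃ m : ℤ, (d : ℝ) * y i = (m : ℝ)}.Nonempty := by
    choose q hq using hy
    refine ⟨∏ i, (q i).den, Finset.prod_pos fun i _ => (q i).pos, fun i => ?_⟩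
    obtain ⟨c, hc⟩ : ((q i).den : ℕ) ∣ ∏ j, (q j).den :=
      Finset.dvd_prod_of_mem _ (Finset.mem_univ i)
    refine ⟨c * (q i).num, ?_⟩
    rw [hq i, hc]
    have hden : ((q i).den : ℚ) * q i = (q i).num := by
      rw [mul_comm, Rat.mul_den_eq_num]
    have h1 : ((q i).den * c : ℚ) * q i = ((c * (q i).num : ℤ) : ℚ) := by
      push_cast
      rw [mul_comm ((q i).den : ℚ) (c : ℚ), mul_assoc, hden]
    calc ((((q i).den * c : ℕ)) : ℝ) * ((q i : ℚ) : ℝ)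
        = (((q i).den * c : ℚ) * q i : ℚ) := by push_cast; ring
      _ = ((c * (q i).num : ℤ) : ℝ) := by rw [h1]; push_cast; ring
  exact Nat.sInf_mem hne

lemma tildeR_int {n : ℕ} {y : Fin n → ℝ} (hy : IsRationalPoint y) :
    ∀ i, ∃ c : ℤ, tildeR y i = (c : ℝ) := by
  obtain ⟨hpos, hint⟩ := den_mem hy
  intro i
  refine Fin.lastCases ?_ (fun j => ?_) i
  · exact ⟨den y, by simp [tildeR]⟩
  · obtain ⟨c, hc⟩ := hint j
    exact ⟨c, by simpa [tildeR] using hc⟩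

lemma tildeR_li {n m : ℕ} {v : Fin (m + 1) → (Fin n → ℝ)}
    (hrat : ∀ k, IsRationalPoint (v k)) (haff : AffineIndependent ℝ v) :
    LinearIndependent ℝ (fun k => tildeR (v k)) := by
  rw [Fintype.linearIndependent_iff]
  intro g hg k
  have hpos : ∀ k, (0 : ℝ) < den (v k) := fun k => by
    exact_mod_cast (den_mem (hrat k)).1
  have hlast := congrFun hg (Fin.last n)
  have hcs : ∀ i : Fin n, (∑ k, g k • tildeR (v k)) (Fin.castSucc i) = 0 :=
    fun i => congrFun hg (Fin.castSucc i)
  simp only [Finset.sum_apply, Pi.smul_apply, smul_eq_mul, Pi.zero_apply, tildeR,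
    Fin.snoc_last, Fin.snoc_castSucc, mul_one] at hlast hcs
  set w : Fin (m + 1) → ℝ := fun k => g k * den (v k) with hw
  have h0 : ∑ k, w k = 0 := hlast
  have h1 : ∑ k, w k • v k = 0 := by
    funext i
    simpa [Finset.sum_apply, hw, mul_assoc] using hcs i
  have hwk : w k = 0 :=
    affineIndependent_iff.1 haff Finset.univ w h0 h1 k (Finset.mem_univ k)
  rcases mul_eq_zero.1 hwk with h | h
  · exact h
  · exact absurd h (ne_of_gt (hpos k))

lemma basis_cast_li {N : ℕ} (b : Module.Basis (Fin N) ℤ (Fin N → ℤ)) :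
    LinearIndependent ℝ (fun i => fun j => ((b i j : ℤ) : ℝ)) := by
  classical
  set A : Matrix (Fin N) (Fin N) ℤ := Matrix.of fun i j => b j i with hA
  have hmat : (Pi.basisFun ℤ (Fin N)).toMatrix ⇑b = A := by
    ext i j
    simp [Module.Basis.toMatrix_apply, hA]
  have hu : IsUnit A.det := by
    have h := (Pi.basisFun ℤ (Fin N)).isUnit_det b
    rwa [Module.Basis.det_apply, hmat] at h
  set Ar : Matrix (Fin N) (Fin N) ℝ := A.map (Int.cast) with hAr
  have hu' : IsUnit Ar := by
    rw [Matrix.isUnit_iff_isUnit_det]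
    have : Ar.det = ((Int.castRingHom ℝ) A.det : ℝ) := by
      rw [RingHom.map_det]; rfl
    rw [this]
    exact hu.map (Int.castRingHom ℝ)
  have h := Matrix.linearIndependent_cols_iff_isUnit.2 hu'
  have hfun : (fun i => fun j => ((b i j : ℤ) : ℝ)) = fun i => Ar.transpose i := by
    funext i j
    simp [hAr, hA, Matrix.transpose_apply]
  rw [hfun]
  exact h

end Helpers
/-- An `m`-simplex `T = conv(v₀,…,v_m) ⊆ ℝⁿ` with rational vertices
is regular iff the half-open parallelepiped
`P_T = {Σ λᵢ ṽᵢ : 0 ≤ λᵢ < 1} ⊆ ℝ^{n+1}` contains no nonzero integer point. -/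
theorem regular_iff_parallelepiped (n m : ℕ) (hn : 1 ≤ n) (hm : m ≤ n)
    (v : Fin (m + 1) → (Fin n → ℝ))
    (hrat : ∀ k, IsRationalPoint (v k)) (haff : AffineIndependent ℝ v) :
    IsRegularSimplex v ↔
      ∀ z : Fin (n + 1) → ℝ, (∀ i, ∃ c : ℤ, z i = (c : ℝ)) → z ≠ 0 →
        ¬ ∃ lam : Fin (m + 1) → ℝ, (∀ k, 0 ≤ lam k ∧ lam k < 1) ∧
          z = ∑ k, lam k • tildeR (v k) := by
  classical
  constructor
  · rintro ⟨-, -, b, f, hb⟩ z hz hz0 ⟨lam, hlam, hzeq⟩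
    choose cZ hcZ using hz
    set bR : Fin (n + 1) → Fin (n + 1) → ℝ := fun i j => ((b i j : ℤ) : ℝ) with hbR
    have hli := basis_cast_li b
    set μ : Fin (n + 1) → ℝ := fun i => if h : ∃ k, f k = i then lam h.choose else 0 with hμ
    have hμf : ∀ k, μ (f k) = lam k := by
      intro k
      have h : ∃ k', f k' = f k := ⟨k, rfl⟩
      have : h.choose = k := f.injective h.choose_spec
      simp only [hμ, dif_pos h, this]
    have himg : ∀ F : Fin (n + 1) → ℝ, ∑ i, μ i * F i = ∑ k, lam k * F (f k) := by
      intro F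
      have h1 : ∑ i ∈ Finset.univ.image f, μ i * F i = ∑ i, μ i * F i := by
        refine Finset.sum_subset (Finset.subset_univ _) fun i _ hni => ?_
        have : ¬ ∃ k, f k = i := by
          intro ⟨k, hk⟩
          exact hni (Finset.mem_image.2 ⟨k, Finset.mem_univ k, hk⟩)
        simp [hμ, dif_neg this]
      rw [← h1, Finset.sum_image (fun k _ k' _ h => f.injective h)]
      exact Finset.sum_congr rfl fun k _ => by rw [hμf k]
    set r : Fin (n + 1) → ℤ := fun i => b.repr cZ i with hr
    have hrep : ∀ j, (cZ j : ℝ) = ∑ i, (r i : ℝ) * bR i j := by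
      intro j
      have h := b.sum_repr cZ
      have h2 := congrFun h j
      simp only [Finset.sum_apply, Pi.smul_apply, smul_eq_mul] at h2
      rw [← h2]
      push_cast
      rfl
    have hz1 : ∀ j, z j = ∑ i, μ i * bR i j := by
      intro j
      rw [hzeq]
      simp only [Finset.sum_apply, Pi.smul_apply, smul_eq_mul]
      rw [himg fun i => bR i j]
      exact Finset.sum_congr rfl fun k _ => by show lam k * tildeR (v k) j = lam k * ((b (f k) j : ℤ) : ℝ); rw [hb k j]
    have heq : ∀ i, μ i = (r i : ℝ) := by
      have h0 : ∑ i, (μ i - (r i : ℝ)) • bR i = 0 := by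
        funext j
        simp only [Finset.sum_apply, Pi.smul_apply, smul_eq_mul, Pi.zero_apply, sub_mul]
        rw [Finset.sum_sub_distrib]
        rw [← hz1 j, ← hrep j, ← hcZ j, sub_self]
      intro i
      have := Fintype.linearIndependent_iff.1 hli (fun i => μ i - (r i : ℝ)) h0 i
      linarith
    have hlam0 : ∀ k, lam k = 0 := by
      intro k
      have h1 : lam k = (r (f k) : ℝ) := by rw [← hμf k, heq]
      obtain ⟨h2, h3⟩ := hlam k
      have h4 : (0 : ℝ) ≤ (r (f k) : ℝ) := h1 ▸ h2
      have h5 : ((r (f k) : ℝ)) < 1 := h1 ▸ h3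
      have : r (f k) = 0 := by exact_mod_cast le_antisymm (by exact_mod_cast Int.lt_add_one_iff.1 (by exact_mod_cast h5)) (by exact_mod_cast h4)
      rw [h1, this, Int.cast_zero]
    apply hz0
    rw [hzeq]
    funext j
    simp [hlam0]
  · intro hP
    refine ⟨haff, hrat, ?_⟩
    choose vZ hvZ using fun k => tildeR_int (hrat k)
    have hliR : LinearIndependent ℝ (fun k => tildeR (v k)) := tildeR_li hrat haff
    -- key: integer points in the real span have integer coordinates
    have key : ∀ (z : Fin (n + 1) → ℤ) (μ : Fin (m + 1) → ℝ),
        ((fun i => (z i : ℝ)) = ∑ k, μ k • tildeR (v k)) → ∀ k, μ k = (⌊μ k⌋ : ℝ) := by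
      intro z μ hzμ
      set w : Fin (n + 1) → ℤ := z - ∑ k, ⌊μ k⌋ • vZ k with hw
      have hwR : (fun i => (w i : ℝ)) = ∑ k, (μ k - (⌊μ k⌋ : ℝ)) • tildeR (v k) := by
        funext i
        have h1 := congrFun hzμ i
        simp only [Finset.sum_apply, Pi.smul_apply, smul_eq_mul] at h1 ⊢
        simp only [hw, Pi.sub_apply, Finset.sum_apply, Pi.smul_apply, smul_eq_mul]
        push_cast
        rw [h1, ← Finset.sum_sub_distrib]
        refine Finset.sum_congr rfl fun k _ => ?_
        rw [hvZ k i]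
        ring
      by_cases h0 : (fun i => (w i : ℝ)) = 0
      · intro k
        have hcomb : ∑ k, (μ k - (⌊μ k⌋ : ℝ)) • tildeR (v k) = 0 := by rw [← hwR, h0]
        have := Fintype.linearIndependent_iff.1 hliR (fun k => μ k - (⌊μ k⌋ : ℝ)) hcomb k
        linarith
      · exfalso
        refine hP (fun i => (w i : ℝ)) (fun i => ⟨w i, rfl⟩) h0
          ⟨fun k => μ k - (⌊μ k⌋ : ℝ), fun k =>
            ⟨by show (0:ℝ) ≤ μ k - (⌊μ k⌋ : ℝ); linarith [Int.floor_le (μ k)],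
             by show μ k - (⌊μ k⌋ : ℝ) < 1; linarith [Int.lt_floor_add_one (μ k)]⟩, hwR⟩
    have hliZ : LinearIndependent ℤ vZ := by
      rw [Fintype.linearIndependent_iff]
      intro g hg k
      have hgR : ∑ k, ((g k : ℝ)) • tildeR (v k) = 0 := by
        funext i
        have h1 := congrFun hg i
        simp only [Finset.sum_apply, Pi.smul_apply, smul_eq_mul, Pi.zero_apply] at h1 ⊢
        have : ((∑ x, g x * vZ x i : ℤ) : ℝ) = 0 := by rw [h1]; simp
        push_cast at this
        rw [← this]
        exact Finset.sum_congr rfl fun k _ => by rw [hvZ k i]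
      have := Fintype.linearIndependent_iff.1 hliR (fun k => (g k : ℝ)) hgR k
      exact_mod_cast this
    set L : Submodule ℤ (Fin (n + 1) → ℤ) := Submodule.span ℤ (Set.range vZ) with hL
    have hpure : ∀ (z : Fin (n + 1) → ℤ) (c : ℤ), c ≠ 0 → c • z ∈ L → z ∈ L := by
      intro z c hc hmem
      obtain ⟨a, ha⟩ := (Submodule.mem_span_range_iff_exists_fun ℤ).1 hmem
      have hcR : (c : ℝ) ≠ 0 := Int.cast_ne_zero.2 hc
      have hzR : (fun i => (z i : ℝ)) = ∑ k, ((a k : ℝ) / (c : ℝ)) • tildeR (v k) := by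
        funext i
        have h1 := congrFun ha i
        simp only [Finset.sum_apply, Pi.smul_apply, smul_eq_mul] at h1
        have h2 : ((∑ x, a x * vZ x i : ℤ) : ℝ) = ((c * z i : ℤ) : ℝ) := by
          rw [h1]
        push_cast at h2
        simp only [Finset.sum_apply, Pi.smul_apply, smul_eq_mul]
        have h3 : ∑ x, (a x : ℝ) * tildeR (v x) i = (c : ℝ) * (z i : ℝ) := by
          rw [← h2]
          exact Finset.sum_congr rfl fun k _ => by rw [hvZ k i]
        rw [eq_comm]
        calc ∑ x, ((a x : ℝ) / (c : ℝ)) * tildeR (v x) i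
            = (∑ x, (a x : ℝ) * tildeR (v x) i) / (c : ℝ) := by
              rw [Finset.sum_div]
              exact Finset.sum_congr rfl fun k _ => by ring
          _ = ((c : ℝ) * (z i : ℝ)) / (c : ℝ) := by rw [h3]
          _ = (z i : ℝ) := mul_div_cancel_left₀ _ hcR
      have hfl := key z _ hzR
      have hzeq : z = ∑ k, ⌊(a k : ℝ) / (c : ℝ)⌋ • vZ k := by
        funext i
        have h1 := congrFun hzR i
        simp only [Finset.sum_apply, Pi.smul_apply, smul_eq_mul] at h1
        have h2 : (z i : ℝ) = ((∑ k, ⌊(a k : ℝ) / (c : ℝ)⌋ • vZ k) i : ℤ) := by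
          rw [h1]
          push_cast [Finset.sum_apply, Pi.smul_apply, smul_eq_mul]
          refine Finset.sum_congr rfl fun k _ => ?_
          rw [hvZ k i, hfl k]
          simp [Int.floor_intCast]
        exact_mod_cast h2
      rw [hzeq]
      exact Submodule.sum_mem _ fun k _ =>
        Submodule.smul_mem _ _ (Submodule.subset_span ⟨k, rfl⟩)
    haveI hQtf : NoZeroSMulDivisors ℤ ((Fin (n + 1) → ℤ) ⧸ L) := by
      refine ⟨fun {c q} h => ?_⟩
      by_cases hc : c = 0
      · exact Or.inl hc
      · right
        obtain ⟨z, rfl⟩ := Submodule.Quotient.mk_surjective L q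
        rw [← Submodule.Quotient.mk_smul] at h
        rw [Submodule.Quotient.mk_eq_zero] at h ⊢
        exact hpure z c hc h
    haveI : Module.Free ℤ ((Fin (n + 1) → ℤ) ⧸ L) := inferInstance
    obtain ⟨s, hs⟩ := Module.projective_lifting_property L.mkQ
      (LinearMap.id : ((Fin (n + 1) → ℤ) ⧸ L) →ₗ[ℤ] _) (Submodule.Quotient.mk_surjective L)
    have hsq : ∀ q, L.mkQ (s q) = q := fun q => by simpa using LinearMap.congr_fun hs q
    set φ : (L × ((Fin (n + 1) → ℤ) ⧸ L)) →ₗ[ℤ] (Fin (n + 1) → ℤ) :=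
      L.subtype.comp (LinearMap.fst ℤ _ _) + s.comp (LinearMap.snd ℤ _ _) with hφ
    have hφap : ∀ (l : L) (q), φ (l, q) = (l : Fin (n + 1) → ℤ) + s q := fun l q => rfl
    have hφinj : Function.Injective φ := by
      rw [injective_iff_map_eq_zero]
      rintro ⟨l, q⟩ h
      rw [hφap] at h
      have hq : q = 0 := by
        have h2 := congrArg L.mkQ h
        rw [map_add, hsq q, map_zero] at h2
        have hl0 : L.mkQ (l : Fin (n + 1) → ℤ) = 0 := (Submodule.Quotient.mk_eq_zero L).2 l.2
        rwa [hl0, zero_add] at h2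
      have hl : (l : Fin (n + 1) → ℤ) = 0 := by
        rw [hq, map_zero, add_zero] at h
        exact h
      exact Prod.ext (Subtype.ext hl) hq
    have hφsurj : Function.Surjective φ := by
      intro x
      have hmem : x - s (L.mkQ x) ∈ L := by
        have h0 : L.mkQ (x - s (L.mkQ x)) = 0 := by rw [map_sub, hsq, sub_self]
        exact (Submodule.Quotient.mk_eq_zero L).1 h0
      exact ⟨(⟨x - s (L.mkQ x), hmem⟩, L.mkQ x), by rw [hφap]; simp⟩
    set e := LinearEquiv.ofBijective φ ⟨hφinj, hφsurj⟩ with he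
    set bL : Module.Basis (Fin (m + 1)) ℤ L := Module.Basis.span hliZ with hbL
    set bQ := Module.Free.chooseBasis ℤ ((Fin (n + 1) → ℤ) ⧸ L) with hbQ
    haveI : Module.Finite ℤ L := Module.Finite.of_basis bL
    have hcard : Fintype.card (Fin (m + 1) ⊕ Module.Free.ChooseBasisIndex ℤ ((Fin (n + 1) → ℤ) ⧸ L)) = n + 1 := by
      have h1 : Module.finrank ℤ (L × ((Fin (n + 1) → ℤ) ⧸ L)) = n + 1 := by
        rw [e.finrank_eq, Module.finrank_pi, Fintype.card_fin]
      rw [Module.finrank_prod] at h1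
      have h2 : Module.finrank ℤ L = m + 1 := by
        rw [Module.finrank_eq_card_basis bL, Fintype.card_fin]
      have h3 : Module.finrank ℤ ((Fin (n + 1) → ℤ) ⧸ L) =
          Fintype.card (Module.Free.ChooseBasisIndex ℤ ((Fin (n + 1) → ℤ) ⧸ L)) :=
        Module.finrank_eq_card_chooseBasisIndex ℤ _
      rw [Fintype.card_sum, Fintype.card_fin, ← h3]
      omega
    set eqv := Fintype.equivFinOfCardEq hcard with heqv
    refine ⟨((bL.prod bQ).map e).reindex eqv, ⟨fun k => eqv (Sum.inl k),
      fun k k' h => Sum.inl.inj (eqv.injective h)⟩, fun k i => ?_⟩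
    have hbk : (((bL.prod bQ).map e).reindex eqv) (eqv (Sum.inl k)) = vZ k := by
      rw [Module.Basis.reindex_apply, Equiv.symm_apply_apply, Module.Basis.map_apply]
      have hpr : (bL.prod bQ) (Sum.inl k) = (bL k, 0) :=
        Prod.ext (Module.Basis.prod_apply_inl_fst bL bQ k) (Module.Basis.prod_apply_inl_snd bL bQ k)
      rw [hpr]
      show φ (bL k, 0) = vZ k
      rw [hφap, map_zero, add_zero, hbL, Module.Basis.span_apply]
    show (((((bL.prod bQ).map e).reindex eqv) (eqv (Sum.inl k)) i : ℤ) : ℝ) = _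
    rw [hbk]
    exact (hvZ k i).symm
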